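/- Let {A_1,...,A_m} be a bimodal collection of disjoint subsets of an abelian group G. For each j let H_j be the internal difference group of A_j and let a_j ∈ A_j. Then for any k ≠ j, A_k is disjoint from the coset a_j + H_j. -/

import Mathlib

variable {G : Type*} [AddCommGroup G] [Fintype G]

/-- `N A i δ` counts the pairs `(a, b)` with `a ∈ A i`, `b ∈ A j` for some `j ≠ i`,
and `a - b = δ`. -/
noncomputable def bimodalCount {ι : Type*} (A : ι → Set G) (i : ι) (δ : G) : ℕ :=
  {p : G × G | p.1 ∈ A i ∧ (∃ j, j ≠ i ∧ p.2 ∈ A j) ∧ p.1 - p.2 = δ}.ncard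

/-- A collection of subsets has the bimodal property if every nonzero `δ` occurs as
an external difference out of `A i` either `0` or `|A i|` times. -/
def IsBimodal {ι : Type*} (A : ι → Set G) : Prop :=
  ∀ δ : G, δ ≠ 0 → ∀ i : ι,
    bimodalCount A i δ = 0 ∨ bimodalCount A i δ = (A i).ncard

/-- The internal difference group of a subset `X`: the subgroup generated by all
differences of elements of `X`. -/
def idg (X : Set G) : AddSubgroup G :=
  AddSubgroup.closure {d : G | ∃ x ∈ X, ∃ y ∈ X, x - y = d}

/-- In a bimodal collection, `A k` is disjoint from the whole coset
`a j + H j` whenever `k ≠ j`. -/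
theorem bimodal_disjoint_coset {m : ℕ} (A : Fin m → Set G)
    (hne : ∀ i, (A i).Nonempty)
    (hdisj : ∀ i j, i ≠ j → Disjoint (A i) (A j))
    (hbim : IsBimodal A)
    (j k : Fin m) (hkj : k ≠ j) (a : G) (ha : a ∈ A j) :
    Disjoint (A k) ((a + ·) '' (idg (A j) : Set G)) := by
  classical
  set B : Set G := {g | ∃ i, i ≠ j ∧ g ∈ A i} with hBdef
  have hBj : ∀ g ∈ B, g ∉ A j := by
    rintro g ⟨i, hij, hgi⟩ hgj
    exact (hdisj i j hij).le_bot ⟨hgi, hgj⟩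
  -- count equals cardinality of a subset of A j
  have hcount : ∀ δ : G, bimodalCount A j δ = {x | x ∈ A j ∧ x - δ ∈ B}.ncard := by
    intro δ
    unfold bimodalCount
    have hset : {p : G × G | p.1 ∈ A j ∧ (∃ i, i ≠ j ∧ p.2 ∈ A i) ∧ p.1 - p.2 = δ}
        = (fun x => (x, x - δ)) '' {x | x ∈ A j ∧ x - δ ∈ B} := by
      ext ⟨x, y⟩
      simp only [Set.mem_setOf_eq, Set.mem_image, Prod.mk.injEq]
      constructor
      · rintro ⟨h1, h2, h3⟩
        have hy : x - δ = y := by rw [← h3]; abel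
        exact ⟨x, ⟨h1, hy ▸ h2⟩, rfl, hy⟩
      · rintro ⟨x', ⟨h1, h2⟩, hx, hy⟩
        subst hx; subst hy
        exact ⟨h1, h2, by abel⟩
    rw [hset, Set.ncard_image_of_injective]
    intro u v huv
    exact (Prod.mk.injEq _ _ _ _ ▸ huv).1
  -- key bimodal consequence
  have hkey : ∀ δ : G, δ ≠ 0 → (∃ x ∈ A j, x - δ ∈ B) → ∀ x ∈ A j, x - δ ∈ B := by
    intro δ hδ ⟨x0, hx0, hx0B⟩ x hx
    have hT : {x | x ∈ A j ∧ x - δ ∈ B}.ncard ≠ 0 := by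
      intro h0
      rw [Set.ncard_eq_zero (Set.toFinite _)] at h0
      have hne' : {x | x ∈ A j ∧ x - δ ∈ B}.Nonempty := ⟨x0, ⟨hx0, hx0B⟩⟩
      exact hne'.ne_empty h0
    have := hbim δ hδ j
    rw [hcount δ] at this
    rcases this with h0 | hfull
    · exact absurd h0 hT
    · have hsub : {x | x ∈ A j ∧ x - δ ∈ B} ⊆ A j := fun y hy => hy.1
      have heq : {x | x ∈ A j ∧ x - δ ∈ B} = A j :=
        Set.eq_of_subset_of_ncard_le hsub (le_of_eq hfull.symm) (Set.toFinite _)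
      rw [← heq] at hx
      exact hx.2
  -- generator step
  have hgen : ∀ x ∈ A j, ∀ y ∈ A j, ∀ c ∈ B, c + (x - y) ∈ B := by
    intro x hx y hy c hc
    have hδ : y - c ≠ 0 := by
      intro h
      have : y = c := by rwa [sub_eq_zero] at h
      exact hBj c hc (this ▸ hy)
    have := hkey (y - c) hδ ⟨y, hy, by simpa using hc⟩ x hx
    rwa [show x - (y - c) = c + (x - y) by abel] at this
  -- closure step
  have hstep : ∀ h ∈ idg (A j), ∀ c ∈ B, c + h ∈ B ∧ c - h ∈ B := by
    intro h hh
    induction hh using AddSubgroup.closure_induction with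
    | mem d hd =>
      obtain ⟨x, hx, y, hy, hxy⟩ := hd
      intro c hc
      refine ⟨hxy ▸ hgen x hx y hy c hc, ?_⟩
      have := hgen y hy x hx c hc
      rwa [show c + (y - x) = c - (x - y) by abel, hxy] at this
    | zero => intro c hc; exact ⟨by simpa using hc, by simpa using hc⟩
    | add h1 h2 hh1 hh2 ih1 ih2 =>
      intro c hc
      constructor
      · have := (ih2 (c + h1) (ih1 c hc).1).1
        rwa [show c + h1 + h2 = c + (h1 + h2) by abel] at this
      · have := (ih2 (c - h1) (ih1 c hc).2).2
        rwa [show c - h1 - h2 = c - (h1 + h2) by abel] at this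
    | neg h1 hh1 ih =>
      intro c hc
      refine ⟨?_, ?_⟩
      · have := (ih c hc).2
        rwa [show c - h1 = c + (-h1) by abel] at this
      · have := (ih c hc).1
        rwa [show c + h1 = c - (-h1) by abel] at this
  -- conclude
  rw [Set.disjoint_left]
  rintro b hbk ⟨h, hh, hbeq⟩
  have hbB : b ∈ B := ⟨k, hkj, hbk⟩
  have hbeq' : a + h = b := hbeq
  have h2 : b - h ∈ B := (hstep h hh b hbB).2
  rw [← hbeq', add_sub_cancel_right] at h2
  exact hBj a h2 ha
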